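/- For every index i and every sequence s = (s_j) with 0 ≤ s_j ≤ 1, the Harris–Sevastyanov transform satisfies (f_i(s(1−q)+q) − q_i)/(1−q_i) = (∑_j h̃_{ij} s_j)/(1+m̃ − m̃ ∑_j g̃_j s_j), where s(1−q)+q denotes the sequence with entries s_j(1−q_j)+q_j; moreover ∑_j g̃_j = 1 and ∑_j h̃_{ij} = 1 for every i, so the transformed reproduction laws are multivariate shifted geometric distributions. -/

import Mathlib

/-- The linear-fractional generating function
`f_i(s) = h_{i0} + (∑_j h_{ij} s_j) / (1 + m - m ∑_j g_j s_j)` with `h_{i0} = 1 - ∑_j h_{ij}`. -/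
noncomputable def lfGen (H : ℕ → ℕ → ℝ) (g : ℕ → ℝ) (m : ℝ) (i : ℕ) (s : ℕ → ℝ) : ℝ :=
  (1 - ∑' j, H i j) + (∑' j, H i j * s j) / (1 + m - m * ∑' j, g j * s j)

/-- Auxiliary comparison lemma. -/
lemma summable_mul_of_le_one {f c : ℕ → ℝ} (hf : Summable f) (hf0 : ∀ j, 0 ≤ f j)
    (hc0 : ∀ j, 0 ≤ c j) (hc1 : ∀ j, c j ≤ 1) : Summable (fun j => f j * c j) := by
  refine Summable.of_nonneg_of_le (fun j => mul_nonneg (hf0 j) (hc0 j)) (fun j => ?_) hf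
  calc f j * c j ≤ f j * 1 := mul_le_mul_of_nonneg_left (hc1 j) (hf0 j)
    _ = f j := mul_one _

/-- the Harris–Sevastyanov transform
`(f_i(s(1-q)+q) - q_i)/(1-q_i)` equals `(∑_j h̃_{ij} s_j)/(1 + m̃ - m̃ ∑_j g̃_j s_j)` with
`m̃ = ρ-1`, `g̃_j = m g_j (1-q_j)/(ρ-1)`, `h̃_{ij} = (1-q_j)(h_{ij} + m g_j (q_i - h_{i0}))/(1-q_i)`;
moreover `∑_j g̃_j = 1` and `∑_j h̃_{ij} = 1` for every `i`. -/
theorem harris_sevastyanov_is_shifted_geometric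
    (H : ℕ → ℕ → ℝ) (g q : ℕ → ℝ) (m ρ : ℝ)
    (hH : ∀ i j, 0 ≤ H i j) (hHsum : ∀ i, Summable (H i)) (hHrow : ∀ i, ∑' j, H i j ≤ 1)
    (hg : ∀ j, 0 ≤ g j) (hgsum : Summable g) (hg1 : ∑' j, g j = 1)
    (hm : 0 < m) (hρ1 : 1 < ρ) (hρm : ρ < 1 + m)
    (hq0 : ∀ i, 0 < q i) (hq1 : ∀ i, q i < 1)
    (hfix : ∀ i, lfGen H g m i q = q i)
    (hgq : ∑' j, g j * q j = (1 + m - ρ) / m) :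
    (∀ i, ∀ s : ℕ → ℝ, (∀ j, s j ∈ Set.Icc (0:ℝ) 1) →
        (lfGen H g m i (fun j => s j * (1 - q j) + q j) - q i) / (1 - q i)
          = (∑' j, ((1 - q j) * (H i j + m * g j * (q i - (1 - ∑' l, H i l))) / (1 - q i)) * s j)
            / (1 + (ρ - 1) - (ρ - 1) * ∑' j, (m * g j * (1 - q j) / (ρ - 1)) * s j))
    ∧ (∑' j, m * g j * (1 - q j) / (ρ - 1)) = 1
    ∧ ∀ i, (∑' j, (1 - q j) * (H i j + m * g j * (q i - (1 - ∑' l, H i l))) / (1 - q i)) = 1 := by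
  have hm0 : m ≠ 0 := ne_of_gt hm
  have hρ0 : ρ ≠ 0 := by linarith
  have hρ1' : ρ - 1 ≠ 0 := by intro h; linarith [sub_eq_zero.mp h]
  -- summability facts
  have sgq : Summable (fun j => g j * q j) :=
    summable_mul_of_le_one hgsum hg (fun j => (hq0 j).le) (fun j => (hq1 j).le)
  have sHq : ∀ i, Summable (fun j => H i j * q j) := fun i =>
    summable_mul_of_le_one (hHsum i) (hH i) (fun j => (hq0 j).le) (fun j => (hq1 j).le)
  have sg1q : Summable (fun j => g j * (1 - q j)) :=
    summable_mul_of_le_one hgsum hg (fun j => by linarith [hq1 j]) (fun j => by linarith [hq0 j])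
  have sH1q : ∀ i, Summable (fun j => H i j * (1 - q j)) := fun i =>
    summable_mul_of_le_one (hHsum i) (hH i) (fun j => by linarith [hq1 j]) (fun j => by linarith [hq0 j])
  -- the fixed-point relation
  have hDq : 1 + m - m * ∑' j, g j * q j = ρ := by
    rw [hgq]; field_simp; ring
  have hfix' : ∀ i, ∑' j, H i j * q j = ρ * (q i - (1 - ∑' j, H i j)) := by
    intro i
    have h := hfix i
    rw [lfGen, hDq] at h
    have h2 : (∑' j, H i j * q j) / ρ = q i - (1 - ∑' j, H i j) := by linarith
    rw [div_eq_iff hρ0] at h2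
    rw [h2]; ring
  -- `∑ g (1-q) = (ρ-1)/m`
  have hg1q : ∑' j, g j * (1 - q j) = (ρ - 1) / m := by
    have : (fun j => g j * (1 - q j)) = fun j => g j - g j * q j := funext fun j => by ring
    rw [this, Summable.tsum_sub hgsum sgq, hg1, hgq]
    field_simp; ring
  -- second conclusion
  have hgt1 : (∑' j, m * g j * (1 - q j) / (ρ - 1)) = 1 := by
    have : (fun j => m * g j * (1 - q j) / (ρ - 1)) = fun j => (m / (ρ - 1)) * (g j * (1 - q j)) :=
      funext fun j => by ring
    rw [this, tsum_mul_left, hg1q]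
    field_simp
  -- third conclusion
  have hht1 : ∀ i, (∑' j, (1 - q j) * (H i j + m * g j * (q i - (1 - ∑' l, H i l))) / (1 - q i)) = 1 := by
    intro i
    have hqi : (1 : ℝ) - q i ≠ 0 := by intro h; have := hq1 i; nlinarith [sub_eq_zero.mp h]
    set A := ∑' l, H i l with hA
    have hH1q : ∑' j, H i j * (1 - q j) = A - ρ * (q i - (1 - A)) := by
      have : (fun j => H i j * (1 - q j)) = fun j => H i j - H i j * q j := funext fun j => by ring
      rw [this, Summable.tsum_sub (hHsum i) (sHq i), hfix' i]
    have heq : (fun j => (1 - q j) * (H i j + m * g j * (q i - (1 - A))) / (1 - q i))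
        = fun j => (H i j * (1 - q j) + (m * (q i - (1 - A))) * (g j * (1 - q j))) / (1 - q i) :=
      funext fun j => by ring
    rw [heq, tsum_div_const, Summable.tsum_add (sH1q i) (sg1q.mul_left _), tsum_mul_left, hH1q, hg1q]
    field_simp
    ring
  refine ⟨?_, hgt1, hht1⟩
  -- main identity
  intro i s hs
  have hqi : (1 : ℝ) - q i ≠ 0 := by intro h; have := hq1 i; nlinarith [sub_eq_zero.mp h]
  set A := ∑' l, H i l with hA
  have hs0 : ∀ j, 0 ≤ s j := fun j => (hs j).1
  have hs1 : ∀ j, s j ≤ 1 := fun j => (hs j).2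
  have ht0 : ∀ j, 0 ≤ s j * (1 - q j) + q j := fun j => by nlinarith [hq0 j, hq1 j, hs0 j, hs1 j]
  have ht1 : ∀ j, s j * (1 - q j) + q j ≤ 1 := fun j => by nlinarith [hq0 j, hq1 j, hs0 j, hs1 j]
  have hqs0 : ∀ j, 0 ≤ (1 - q j) * s j := fun j => by nlinarith [hq1 j, hs0 j]
  have hqs1 : ∀ j, (1 - q j) * s j ≤ 1 := fun j => by nlinarith [hq0 j, hq1 j, hs0 j, hs1 j]
  have sHs : Summable (fun j => H i j * ((1 - q j) * s j)) :=
    summable_mul_of_le_one (hHsum i) (hH i) hqs0 hqs1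
  have sgs : Summable (fun j => g j * ((1 - q j) * s j)) :=
    summable_mul_of_le_one hgsum hg hqs0 hqs1
  set X := ∑' j, H i j * ((1 - q j) * s j) with hX
  set Y := ∑' j, g j * ((1 - q j) * s j) with hY
  -- bounds on Y
  have hY0 : 0 ≤ Y := tsum_nonneg (fun j => mul_nonneg (hg j) (hqs0 j))
  have hYle : Y ≤ (ρ - 1) / m := by
    rw [hY, ← hg1q]
    refine Summable.tsum_le_tsum (fun j => ?_) sgs sg1q
    have h1 : 0 ≤ g j * (1 - q j) := mul_nonneg (hg j) (by linarith [hq1 j])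
    calc g j * ((1 - q j) * s j) = (g j * (1 - q j)) * s j := by ring
      _ ≤ (g j * (1 - q j)) * 1 := mul_le_mul_of_nonneg_left (hs1 j) h1
      _ = g j * (1 - q j) := mul_one _
  have hD : 0 < ρ - m * Y := by
    have := mul_le_mul_of_nonneg_left hYle hm.le
    have h2 : m * ((ρ - 1) / m) = ρ - 1 := by field_simp
    nlinarith
  have hDne : ρ - m * Y ≠ 0 := ne_of_gt hD
  -- tsum computations
  have hHt : ∑' j, H i j * (s j * (1 - q j) + q j) = X + ρ * (q i - (1 - A)) := by
    have : (fun j => H i j * (s j * (1 - q j) + q j))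
        = fun j => H i j * ((1 - q j) * s j) + H i j * q j := funext fun j => by ring
    rw [this, Summable.tsum_add sHs (sHq i), hfix' i]
  have hgt : ∑' j, g j * (s j * (1 - q j) + q j) = Y + (1 + m - ρ) / m := by
    have : (fun j => g j * (s j * (1 - q j) + q j))
        = fun j => g j * ((1 - q j) * s j) + g j * q j := funext fun j => by ring
    rw [this, Summable.tsum_add sgs sgq, hgq]
  have hnum : (∑' j, ((1 - q j) * (H i j + m * g j * (q i - (1 - A))) / (1 - q i)) * s j)
      = (X + (m * (q i - (1 - A))) * Y) / (1 - q i) := by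
    have heq : (fun j => ((1 - q j) * (H i j + m * g j * (q i - (1 - A))) / (1 - q i)) * s j)
        = fun j => (H i j * ((1 - q j) * s j)
            + (m * (q i - (1 - A))) * (g j * ((1 - q j) * s j))) / (1 - q i) :=
      funext fun j => by ring
    rw [heq, tsum_div_const, Summable.tsum_add sHs (sgs.mul_left _), tsum_mul_left]
  have hden : (∑' j, (m * g j * (1 - q j) / (ρ - 1)) * s j) = (m / (ρ - 1)) * Y := by
    have heq : (fun j => (m * g j * (1 - q j) / (ρ - 1)) * s j)
        = fun j => (m / (ρ - 1)) * (g j * ((1 - q j) * s j)) := funext fun j => by ring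
    rw [heq, tsum_mul_left]
  rw [lfGen, hHt, hgt, hnum, hden]
  have hden2 : 1 + m - m * (Y + (1 + m - ρ) / m) = ρ - m * Y := by field_simp; ring
  rw [hden2]
  have hden3 : 1 + (ρ - 1) - (ρ - 1) * ((m / (ρ - 1)) * Y) = ρ - m * Y := by
    field_simp
    ring
  rw [hden3]
  field_simp
  ring
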